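/- For every integer a and all natural numbers c, d, the point p = (1/2, 1/4, 1/4, …, 1/4) ∈ ℂ^{c+d+1} is a critical point of Φ_{a,c,d}: all c+d+1 complex partial derivatives of Φ_{a,c,d} vanish at p. Explicitly, at p the following hold: Σ_{i=1}^{c}[log(1−e^{−2πi(z₁+z_{i+1})}) + log(1−e^{2πi(z₁+z_{i+1})}) − log(1−e^{2πi z₁})] − Σ_{i=1}^{d}[log(1−e^{2πi(z₁+z_{c+i+1})}) + log(1−e^{−2πi(z₁+z_{c+i+1})}) − log(1−e^{−2πi z₁})] = −4πi·a·(z₁ − 1/2), and for each i the corresponding four-term log equations vanish. -/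

import Mathlib

open Real

/-- The dilogarithm `Li₂(z) = -∫₀¹ log(1 - t z)/t dt` (principal branch of `log`). -/
noncomputable def Li2 (z : ℂ) : ℂ :=
  -∫ t in (0:ℝ)..1, Complex.log (1 - (t:ℂ) * z) / (t:ℂ)

/-- `ψ(z₁,w)`, the clasp summand of the potential function. -/
noncomputable def psi (z₁ w : ℂ) : ℂ :=
  (1 / (2 * (π:ℂ) * Complex.I)) *
    (Li2 (Complex.exp (-(2*(π:ℂ)*Complex.I) * (z₁ + w)))
     - Li2 (Complex.exp (-(2*(π:ℂ)*Complex.I) * w))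
     + Li2 (Complex.exp (2*(π:ℂ)*Complex.I * w))
     - Li2 (Complex.exp (2*(π:ℂ)*Complex.I * (z₁ + w)))
     + Li2 (Complex.exp (2*(π:ℂ)*Complex.I * z₁)))

/-- `κ(z₁,w)`, the mirror-clasp summand of the potential function. -/
noncomputable def kap (z₁ w : ℂ) : ℂ :=
  (1 / (2 * (π:ℂ) * Complex.I)) *
    (-Li2 (Complex.exp (2*(π:ℂ)*Complex.I * (z₁ + w)))
     + Li2 (Complex.exp (2*(π:ℂ)*Complex.I * w))
     - Li2 (Complex.exp (-(2*(π:ℂ)*Complex.I) * w))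
     + Li2 (Complex.exp (-(2*(π:ℂ)*Complex.I) * (z₁ + w)))
     - Li2 (Complex.exp (-(2*(π:ℂ)*Complex.I) * z₁)))

/-- The potential function `Φ_{a,c,d}` of the Whitehead chain `W_{a,1,c,d}`
(at colors `s₁ = s₂ = 1`). -/
noncomputable def PhiACD (a : ℤ) (c d : ℕ) (z : Fin (c + d + 1) → ℂ) : ℂ :=
  ((a : ℂ) / (2 * (π:ℂ) * Complex.I)) * (2*(π:ℂ)*Complex.I * (z 0 - 1/2))^2
  + ∑ i : Fin c, psi (z 0) (z ⟨i.1 + 1, by have := i.isLt; omega⟩)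
  + ∑ i : Fin d, kap (z 0) (z ⟨c + i.1 + 1, by have := i.isLt; omega⟩)

/-- The point `p = (1/2, 1/4, …, 1/4) ∈ ℂ^{c+d+1}`. -/
noncomputable def critPt (c d : ℕ) : Fin (c + d + 1) → ℂ :=
  fun j => if j = 0 then 1/2 else 1/4

open Complex MeasureTheory intervalIntegral Metric in
lemma Li2_hasDerivAt {z₀ : ℂ} (hz : z₀ ≠ 0) (hn : ‖z₀‖ ≤ 1)
    (hre : ∀ w ∈ Metric.ball z₀ (1/4:ℝ), ∀ t ∈ Set.Icc (0:ℝ) 1, (1/2:ℝ) ≤ (1 - (t:ℂ)*w).re) :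
    HasDerivAt Li2 (-Complex.log (1 - z₀) / z₀) z₀ := by
  have hIoc : Set.uIoc (0:ℝ) 1 = Set.Ioc (0:ℝ) 1 := Set.uIoc_of_le zero_le_one
  -- basic facts
  have hne : ∀ w ∈ Metric.ball z₀ (1/4:ℝ), ∀ t ∈ Set.Icc (0:ℝ) 1, (1 - (t:ℂ)*w) ≠ 0 := by
    intro w hw t ht h0
    have := hre w hw t ht
    rw [h0] at this; simp at this; linarith
  have hslit : ∀ w ∈ Metric.ball z₀ (1/4:ℝ), ∀ t ∈ Set.Icc (0:ℝ) 1,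
      (1 - (t:ℂ)*w) ∈ Complex.slitPlane := by
    intro w hw t ht
    exact Or.inl (by linarith [hre w hw t ht])
  have hz₀ball : z₀ ∈ Metric.ball z₀ (1/4:ℝ) := Metric.mem_ball_self (by norm_num)
  -- norm bound on log
  have hlogbound : ∀ (w : ℂ), ‖Complex.log w‖ ≤ |Real.log (‖w‖)| + π := by
    intro w
    have h1 : ‖Complex.log w‖ ≤ |(Complex.log w).re| + |(Complex.log w).im| :=
      Complex.norm_le_abs_re_add_abs_im _
    refine h1.trans ?_
    rw [Complex.log_re, Complex.log_im]
    exact add_le_add le_rfl (Complex.abs_arg_le_pi _)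
  -- the differentiation under the integral sign
  have main := intervalIntegral.hasDerivAt_integral_of_dominated_loc_of_deriv_le
    (F := fun (x : ℂ) (t : ℝ) => Complex.log (1 - (t:ℂ)*x)/(t:ℂ))
    (F' := fun (x : ℂ) (t : ℝ) => -(1 - (t:ℂ)*x)⁻¹) (x₀ := z₀) (a := 0) (b := 1)
    (μ := volume) (bound := fun _ => 12) (s := Metric.ball z₀ (1/4)) (Metric.ball_mem_nhds _ (by norm_num))
    ?hFmeas ?hFint ?hF'meas ?hbound ?boundint ?hdiff
  case hFmeas =>
    filter_upwards with x
    apply Measurable.aestronglyMeasurable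
    exact (Measurable.clog (measurable_const.sub (Complex.measurable_ofReal.mul_const x))).div
      Complex.measurable_ofReal
  case hFint =>
    rw [intervalIntegrable_iff, hIoc]
    apply MeasureTheory.Integrable.mono' (integrable_const (12:ℝ))
    · apply Measurable.aestronglyMeasurable
      exact (Measurable.clog (measurable_const.sub (Complex.measurable_ofReal.mul_const z₀))).div
        Complex.measurable_ofReal
    · rw [ae_restrict_iff' measurableSet_Ioc]
      filter_upwards with t ht
      have ht' : t ∈ Set.Icc (0:ℝ) 1 := ⟨le_of_lt ht.1, ht.2⟩
      have ht0 : (0:ℝ) < t := ht.1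
      rw [norm_div]
      have hnt : ‖(t:ℂ)‖ = t := by
        simp [abs_of_pos ht0]
      rw [hnt]
      rw [div_le_iff₀ ht0]
      by_cases hc : t ≤ 1/2
      · -- small t : use norm_log_one_add_half_le_self
        have h1 : (1 : ℂ) - (t:ℂ)*z₀ = 1 + (-(t:ℂ)*z₀) := by ring
        rw [h1]
        have hz2 : ‖-(t:ℂ)*z₀‖ ≤ 1/2 := by
          rw [norm_mul, norm_neg, hnt]
          nlinarith [norm_nonneg z₀]
        have := Complex.norm_log_one_add_half_le_self hz2
        have h3 : ‖-(t:ℂ)*z₀‖ = t * ‖z₀‖ := by rw [norm_mul, norm_neg, hnt]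
        rw [h3] at this
        nlinarith [norm_nonneg z₀]
      · push_neg at hc
        have hb : ‖Complex.log (1 - (t:ℂ)*z₀)‖ ≤ 6 := by
          refine (hlogbound _).trans ?_
          have habs1 : ‖1 - (t:ℂ)*z₀‖ ≤ 2 := by
            calc ‖(1:ℂ) - (t:ℂ)*z₀‖ ≤ ‖(1:ℂ)‖ + ‖(t:ℂ)*z₀‖ := norm_sub_le _ _
            _ ≤ 1 + 1 := by
                rw [norm_mul, hnt]
                have : t * ‖z₀‖ ≤ 1 := mul_le_one₀ ht'.2 (norm_nonneg z₀) hn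
                simpa using this
            _ = 2 := by norm_num
          have habs2 : (1/2:ℝ) ≤ ‖1 - (t:ℂ)*z₀‖ :=
            le_trans (hre z₀ hz₀ball t ht') (Complex.re_le_norm _)
          have hl : |Real.log (‖1 - (t:ℂ)*z₀‖)| ≤ Real.log 2 := by
            rw [abs_le]
            constructor
            · have := Real.log_le_log (by norm_num : (0:ℝ) < 1/2) habs2
              rw [Real.log_div one_ne_zero two_ne_zero, Real.log_one] at this
              linarith
            · exact (Real.log_le_log (by linarith) habs1).trans le_rfl
          have : Real.log 2 ≤ 1 := by
            have := Real.log_le_sub_one_of_pos (by norm_num : (0:ℝ) < 2); linarith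
          have hpi : π ≤ 4 := by linarith [Real.pi_le_four]
          linarith
        nlinarith
  case hF'meas =>
    apply Measurable.aestronglyMeasurable
    exact ((measurable_const.sub (Complex.measurable_ofReal.mul_const z₀)).inv).neg
  case hbound =>
    filter_upwards with t ht x hx
    rw [hIoc] at ht
    have ht' : t ∈ Set.Icc (0:ℝ) 1 := ⟨le_of_lt ht.1, ht.2⟩
    rw [norm_neg, norm_inv]
    have h2 : (1/2:ℝ) ≤ ‖1 - (t:ℂ)*x‖ :=
      le_trans (hre x hx t ht') (Complex.re_le_norm _)
    rw [inv_le_comm₀ (by linarith) (by norm_num)]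
    linarith
  case boundint => exact intervalIntegrable_const
  case hdiff =>
    filter_upwards with t ht x hx
    rw [hIoc] at ht
    have ht' : t ∈ Set.Icc (0:ℝ) 1 := ⟨le_of_lt ht.1, ht.2⟩
    have ht0 : (t:ℂ) ≠ 0 := by
      simpa using ne_of_gt ht.1
    have hinner : HasDerivAt (fun x : ℂ => 1 - (t:ℂ)*x) (-(t:ℂ)) x := by
      simpa using ((hasDerivAt_id x).const_mul (t:ℂ)).const_sub 1
    have hlog := hinner.clog (hslit x hx t ht')
    have := hlog.div_const (t:ℂ)
    have hA : (1 : ℂ) - (t:ℂ)*x ≠ 0 := hne x hx t ht'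
    refine this.congr_deriv ?_
    field_simp
  -- evaluate the integral of the derivative
  have heval : (∫ t in (0:ℝ)..1, -(1 - (t:ℂ)*z₀)⁻¹) = Complex.log (1 - z₀) / z₀ := by
    have hftc := intervalIntegral.integral_eq_sub_of_hasDerivAt
      (f := fun t : ℝ => Complex.log (1 - (t:ℂ)*z₀) / z₀)
      (f' := fun t : ℝ => -(1 - (t:ℂ)*z₀)⁻¹) (a := 0) (b := 1) ?_ ?_
    · rw [hftc]
      norm_num
    · intro t ht
      rw [Set.uIcc_of_le zero_le_one] at ht
      have hinner : HasDerivAt (fun z : ℂ => 1 - z * z₀) (-z₀) (t:ℂ) := by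
        simpa using ((hasDerivAt_id (t:ℂ)).mul_const z₀).const_sub 1
      have hslit' : (1 - (t:ℂ)*z₀) ∈ Complex.slitPlane := hslit z₀ hz₀ball t ht
      have hA : (1:ℂ) - (t:ℂ)*z₀ ≠ 0 := hne z₀ hz₀ball t ht
      have hlog : HasDerivAt (fun z : ℂ => Complex.log (1 - z * z₀)) (-z₀ / (1 - (t:ℂ)*z₀)) (t:ℂ) := by
        have := hinner.clog (by rwa [mul_comm (t:ℂ) z₀] at hslit' ⊢ <;> skip)
        convert this using 2 <;> rw [mul_comm]
      have hC := (hlog.div_const z₀).comp_ofReal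
      refine hC.congr_deriv ?_
      field_simp
    · apply ContinuousOn.intervalIntegrable
      rw [Set.uIcc_of_le zero_le_one]
      apply ContinuousOn.neg
      apply ContinuousOn.inv₀
      · exact (continuous_const.sub (Complex.continuous_ofReal.mul continuous_const)).continuousOn
      · intro t ht
        exact hne z₀ hz₀ball t ht
  have hfinal := (main.2).neg
  rw [heval] at hfinal
  have : Li2 = fun x : ℂ => -∫ t in (0:ℝ)..1, Complex.log (1 - (t:ℂ)*x)/(t:ℂ) := rfl
  rw [this]
  refine hfinal.congr_deriv ?_
  rw [neg_div]

open Complex in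
lemma re_bound {z₀ w : ℂ} (hw : w ∈ Metric.ball z₀ (1/4:ℝ)) : |w.re - z₀.re| ≤ 1/4 := by
  have h1 : |(w - z₀).re| ≤ ‖w - z₀‖ := Complex.abs_re_le_norm _
  have h2 : ‖w - z₀‖ ≤ 1/4 := by
    rw [← dist_eq_norm]
    exact le_of_lt (Metric.mem_ball.mp hw)
  simpa [Complex.sub_re] using h1.trans h2

open Complex in
lemma Li2_deriv_I : HasDerivAt Li2 (-Complex.log (1 - I) / I) I := by
  apply Li2_hasDerivAt I_ne_zero (by simp)
  intro w hw t ht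
  have := re_bound hw
  simp only [Complex.I_re, sub_zero] at this
  have h : (1 - (t:ℂ)*w).re = 1 - t * w.re := by
    simp [Complex.sub_re, Complex.mul_re]
  rw [h]
  rcases abs_le.mp this with ⟨h1, h2⟩
  nlinarith [ht.1, ht.2]

open Complex in
lemma Li2_deriv_negI : HasDerivAt Li2 (-Complex.log (1 + I) / (-I)) (-I) := by
  have := Li2_hasDerivAt (z₀ := -I) (by simp [I_ne_zero]) (by simp) ?_
  · convert this using 2; ring
  intro w hw t ht
  have := re_bound hw
  simp only [Complex.neg_re, Complex.I_re, neg_zero, sub_zero] at this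
  have h : (1 - (t:ℂ)*w).re = 1 - t * w.re := by
    simp [Complex.sub_re, Complex.mul_re]
  rw [h]
  rcases abs_le.mp this with ⟨h1, h2⟩
  nlinarith [ht.1, ht.2]

open Complex in
lemma Li2_deriv_negOne : HasDerivAt Li2 (-Complex.log 2 / (-1)) (-1) := by
  have := Li2_hasDerivAt (z₀ := -1) (by simp) (by simp) ?_
  · convert this using 2 <;> norm_num
  intro w hw t ht
  have := re_bound hw
  simp only [Complex.neg_re, Complex.one_re] at this
  have h : (1 - (t:ℂ)*w).re = 1 - t * w.re := by
    simp [Complex.sub_re, Complex.mul_re]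
  rw [h]
  rcases abs_le.mp this with ⟨h1, h2⟩
  nlinarith [ht.1, ht.2]

open Complex in
lemma term_deriv {g : ℂ → ℂ} {b t₀ : ℂ} (hg : HasDerivAt g b t₀) (z : ℂ)
    (hz : Complex.exp (g t₀) = z)
    (hLi : HasDerivAt Li2 (-Complex.log (1 - z)/z) z) :
    HasDerivAt (fun t => Li2 (Complex.exp (g t))) (-Complex.log (1 - z) * b) t₀ := by
  have hLi' : HasDerivAt Li2 (-Complex.log (1 - z)/z) (Complex.exp (g t₀)) := hz.symm ▸ hLi
  have hcomp := hLi'.comp t₀ hg.cexp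
  have hzne : z ≠ 0 := hz ▸ Complex.exp_ne_zero (g t₀)
  refine hcomp.congr_deriv ?_
  rw [hz]
  field_simp


open Complex in
lemma expval (r : ℝ) : Complex.exp (r * I) = Real.cos r + Real.sin r * I := by
  rw [Complex.exp_mul_I]; simp

lemma cos32 : Real.cos (3*π/2) = 0 := by
  have h : (3*π/2) = π/2 + π := by ring
  rw [h, Real.cos_add_pi, Real.cos_pi_div_two, neg_zero]

lemma sin32 : Real.sin (3*π/2) = -1 := by
  have h : (3*π/2) = π/2 + π := by ring
  rw [h, Real.sin_add_pi, Real.sin_pi_div_two]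

open Complex in
lemma e1 : Complex.exp (-(2*(π:ℂ)*I) * ((1:ℂ)/2+1/4)) = I := by
  have h : (-(2*(π:ℂ)*I) * ((1:ℂ)/2+1/4)) = ((-(3*π/2) : ℝ) : ℂ) * I := by push_cast; ring
  rw [h, expval, Real.cos_neg, Real.sin_neg, cos32, sin32]; push_cast; ring

open Complex in
lemma e2 : Complex.exp ((2*(π:ℂ)*I) * ((1:ℂ)/2+1/4)) = -I := by
  have h : ((2*(π:ℂ)*I) * ((1:ℂ)/2+1/4)) = ((3*π/2 : ℝ) : ℂ) * I := by push_cast; ring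
  rw [h, expval, cos32, sin32]; push_cast; ring

open Complex in
lemma e3 : Complex.exp ((2*(π:ℂ)*I) * ((1:ℂ)/2)) = -1 := by
  have h : ((2*(π:ℂ)*I) * ((1:ℂ)/2)) = ((π : ℝ) : ℂ) * I := by push_cast; ring
  rw [h, expval, Real.cos_pi, Real.sin_pi]; push_cast; ring

open Complex in
lemma e4 : Complex.exp (-(2*(π:ℂ)*I) * ((1:ℂ)/2)) = -1 := by
  have h : (-(2*(π:ℂ)*I) * ((1:ℂ)/2)) = ((-π : ℝ) : ℂ) * I := by push_cast; ring
  rw [h, expval, Real.cos_neg, Real.sin_neg, Real.cos_pi, Real.sin_pi]; push_cast; ring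

open Complex in
lemma e5 : Complex.exp ((2*(π:ℂ)*I) * ((1:ℂ)/4)) = I := by
  have h : ((2*(π:ℂ)*I) * ((1:ℂ)/4)) = ((π/2 : ℝ) : ℂ) * I := by push_cast; ring
  rw [h, expval, Real.cos_pi_div_two, Real.sin_pi_div_two]; push_cast; ring

open Complex in
lemma e6 : Complex.exp (-(2*(π:ℂ)*I) * ((1:ℂ)/4)) = -I := by
  have h : (-(2*(π:ℂ)*I) * ((1:ℂ)/4)) = ((-(π/2) : ℝ) : ℂ) * I := by push_cast; ring
  rw [h, expval, Real.cos_neg, Real.sin_neg, Real.cos_pi_div_two, Real.sin_pi_div_two]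
  push_cast; ring

open Complex in
lemma logid : Complex.log (1-I) + Complex.log (1+I) = Complex.log 2 := by
  have hc : (1 - I) = (starRingEnd ℂ) (1 + I) := by
    apply Complex.ext <;> simp
  have harg : (1+I).arg ≠ π := by
    intro h
    have := Complex.arg_eq_pi_iff.mp h
    simp at this
  rw [hc, Complex.log_conj _ harg]
  have h2 : (starRingEnd ℂ) (Complex.log (1 + I)) + Complex.log (1 + I)
      = ((2 * (Complex.log (1+I)).re : ℝ) : ℂ) := by
    rw [add_comm]; exact Complex.add_conj _
  rw [h2, Complex.log_re]
  have habs : ‖1+I‖ = Real.sqrt 2 := by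
    rw [Complex.norm_def]; norm_num [Complex.normSq_apply]
  rw [habs, Real.log_sqrt (by norm_num)]
  have h3 : (2:ℂ) = ((2:ℝ):ℂ) := by norm_num
  rw [h3, ← Complex.ofReal_log (by norm_num)]
  push_cast; ring

open Complex in
lemma logid0 : Complex.log (1-I) + Complex.log (1+I) - Complex.log 2 = 0 := by
  rw [logid]; ring

open Complex in
lemma hpi_ne : (2*(π:ℂ)*I) ≠ 0 := by
  simp [Complex.I_ne_zero, Real.pi_ne_zero, Complex.ofReal_ne_zero]

open Complex in
lemma LiI' : HasDerivAt Li2 (-Complex.log (1 - I) / I) I := Li2_deriv_I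

open Complex in
lemma LiNegI' : HasDerivAt Li2 (-Complex.log (1 - (-I)) / (-I)) (-I) := by
  simpa [sub_neg_eq_add] using Li2_deriv_negI

open Complex in
lemma LiNegOne' : HasDerivAt Li2 (-Complex.log (1 - (-1)) / (-1)) (-1) := by
  have h : (1:ℂ) - (-1) = 2 := by norm_num
  rw [h]; exact Li2_deriv_negOne

open Complex in
lemma hg_shift (b e : ℂ) (t₀ : ℂ) : HasDerivAt (fun t : ℂ => b * (t + e)) b t₀ := by
  simpa using ((hasDerivAt_id t₀).add_const e).const_mul b

open Complex in
lemma hg_shift' (b e : ℂ) (t₀ : ℂ) : HasDerivAt (fun t : ℂ => b * (e + t)) b t₀ := by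
  simpa using ((hasDerivAt_id t₀).const_add e).const_mul b

open Complex in
lemma hg_lin (b : ℂ) (t₀ : ℂ) : HasDerivAt (fun t : ℂ => b * t) b t₀ := by
  simpa using (hasDerivAt_id t₀).const_mul b

open Complex in
lemma dpsi1 : HasDerivAt (fun t : ℂ => psi t (1/4)) 0 ((1:ℂ)/2) := by
  have h1 := term_deriv (hg_shift (-(2*(π:ℂ)*I)) (1/4) ((1:ℂ)/2)) I e1 LiI'
  have h2 : HasDerivAt (fun _ : ℂ => Li2 (Complex.exp (-(2*(π:ℂ)*I) * (1/4)))) 0 ((1:ℂ)/2) :=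
    hasDerivAt_const _ _
  have h3 : HasDerivAt (fun _ : ℂ => Li2 (Complex.exp ((2*(π:ℂ)*I) * (1/4)))) 0 ((1:ℂ)/2) :=
    hasDerivAt_const _ _
  have h4 := term_deriv (hg_shift (2*(π:ℂ)*I) (1/4) ((1:ℂ)/2)) (-I) e2 LiNegI'
  have h5 := term_deriv (hg_lin (2*(π:ℂ)*I) ((1:ℂ)/2)) (-1) e3 LiNegOne'
  have hsum := ((((h1.sub h2).add h3).sub h4).add h5).const_mul (1 / (2*(π:ℂ)*I))
  have hD : (1 / (2*(π:ℂ)*I)) *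
      (-Complex.log (1 - I) * (-(2*(π:ℂ)*I)) - 0 + 0
        - -Complex.log (1 - (-I)) * (2*(π:ℂ)*I) + -Complex.log (1 - (-1)) * (2*(π:ℂ)*I)) = 0 := by
    have ha : (1:ℂ) - (-I) = 1 + I := by ring
    have hb : (1:ℂ) - (-1) = 2 := by norm_num
    rw [ha, hb]
    have hX : (-Complex.log (1 - I) * (-(2*(π:ℂ)*I)) - 0 + 0
        - -Complex.log (1 + I) * (2*(π:ℂ)*I) + -Complex.log 2 * (2*(π:ℂ)*I))
        = (2*(π:ℂ)*I) * (Complex.log (1-I) + Complex.log (1+I) - Complex.log 2) := by ring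
    rw [hX, logid0, mul_zero, mul_zero]
  rw [hD] at hsum
  exact hsum

open Complex in
lemma dkap1 : HasDerivAt (fun t : ℂ => kap t (1/4)) 0 ((1:ℂ)/2) := by
  have h4 := term_deriv (hg_shift (2*(π:ℂ)*I) (1/4) ((1:ℂ)/2)) (-I) e2 LiNegI'
  have h3 : HasDerivAt (fun _ : ℂ => Li2 (Complex.exp ((2*(π:ℂ)*I) * (1/4)))) 0 ((1:ℂ)/2) :=
    hasDerivAt_const _ _
  have h2 : HasDerivAt (fun _ : ℂ => Li2 (Complex.exp (-(2*(π:ℂ)*I) * (1/4)))) 0 ((1:ℂ)/2) :=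
    hasDerivAt_const _ _
  have h1 := term_deriv (hg_shift (-(2*(π:ℂ)*I)) (1/4) ((1:ℂ)/2)) I e1 LiI'
  have h5 := term_deriv (hg_lin (-(2*(π:ℂ)*I)) ((1:ℂ)/2)) (-1) e4 LiNegOne'
  have hsum := ((((h4.neg.add h3).sub h2).add h1).sub h5).const_mul (1 / (2*(π:ℂ)*I))
  have hD : (1 / (2*(π:ℂ)*I)) *
      (-(-Complex.log (1 - (-I)) * (2*(π:ℂ)*I)) + 0 - 0
        + -Complex.log (1 - I) * (-(2*(π:ℂ)*I)) - -Complex.log (1 - (-1)) * (-(2*(π:ℂ)*I))) = 0 := by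
    have ha : (1:ℂ) - (-I) = 1 + I := by ring
    have hb : (1:ℂ) - (-1) = 2 := by norm_num
    rw [ha, hb]
    have hX : (-(-Complex.log (1 + I) * (2*(π:ℂ)*I)) + 0 - 0
        + -Complex.log (1 - I) * (-(2*(π:ℂ)*I)) - -Complex.log 2 * (-(2*(π:ℂ)*I)))
        = (2*(π:ℂ)*I) * (Complex.log (1-I) + Complex.log (1+I) - Complex.log 2) := by ring
    rw [hX, logid0, mul_zero, mul_zero]
  rw [hD] at hsum
  exact hsum

open Complex in
lemma dpsi2 : HasDerivAt (fun w : ℂ => psi (1/2) w) 0 ((1:ℂ)/4) := by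
  have h1 := term_deriv (hg_shift' (-(2*(π:ℂ)*I)) (1/2) ((1:ℂ)/4)) I (by
    have : -(2*(π:ℂ)*I) * ((1:ℂ)/2 + 1/4) = -(2*(π:ℂ)*I) * ((1:ℂ)/2+1/4) := rfl
    exact e1) LiI'
  have h2 := term_deriv (hg_lin (-(2*(π:ℂ)*I)) ((1:ℂ)/4)) (-I) e6 LiNegI'
  have h3 := term_deriv (hg_lin (2*(π:ℂ)*I) ((1:ℂ)/4)) I e5 LiI'
  have h4 := term_deriv (hg_shift' (2*(π:ℂ)*I) (1/2) ((1:ℂ)/4)) (-I) e2 LiNegI'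
  have h5 : HasDerivAt (fun _ : ℂ => Li2 (Complex.exp ((2*(π:ℂ)*I) * (1/2)))) 0 ((1:ℂ)/4) :=
    hasDerivAt_const _ _
  have hsum := ((((h1.sub h2).add h3).sub h4).add h5).const_mul (1 / (2*(π:ℂ)*I))
  have hD : (1 / (2*(π:ℂ)*I)) *
      (-Complex.log (1 - I) * (-(2*(π:ℂ)*I)) - -Complex.log (1 - (-I)) * (-(2*(π:ℂ)*I))
        + -Complex.log (1 - I) * (2*(π:ℂ)*I) - -Complex.log (1 - (-I)) * (2*(π:ℂ)*I) + 0) = 0 := by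
    ring
  rw [hD] at hsum
  exact hsum

open Complex in
lemma dkap2 : HasDerivAt (fun w : ℂ => kap (1/2) w) 0 ((1:ℂ)/4) := by
  have h4 := term_deriv (hg_shift' (2*(π:ℂ)*I) (1/2) ((1:ℂ)/4)) (-I) e2 LiNegI'
  have h3 := term_deriv (hg_lin (2*(π:ℂ)*I) ((1:ℂ)/4)) I e5 LiI'
  have h2 := term_deriv (hg_lin (-(2*(π:ℂ)*I)) ((1:ℂ)/4)) (-I) e6 LiNegI'
  have h1 := term_deriv (hg_shift' (-(2*(π:ℂ)*I)) (1/2) ((1:ℂ)/4)) I e1 LiI'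
  have h5 : HasDerivAt (fun _ : ℂ => Li2 (Complex.exp (-(2*(π:ℂ)*I) * (1/2)))) 0 ((1:ℂ)/4) :=
    hasDerivAt_const _ _
  have hsum := ((((h4.neg.add h3).sub h2).add h1).sub h5).const_mul (1 / (2*(π:ℂ)*I))
  have hD : (1 / (2*(π:ℂ)*I)) *
      (-(-Complex.log (1 - (-I)) * (2*(π:ℂ)*I)) + -Complex.log (1 - I) * (2*(π:ℂ)*I)
        - -Complex.log (1 - (-I)) * (-(2*(π:ℂ)*I)) + -Complex.log (1 - I) * (-(2*(π:ℂ)*I)) - 0) = 0 := by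
    ring
  rw [hD] at hsum
  exact hsum

set_option maxHeartbeats 2000000 in
theorem stmt_14 (a : ℤ) (c d : ℕ) :
    -- all `c+d+1` complex partial derivatives of `Φ_{a,c,d}` vanish at `p`
    (∀ k : Fin (c + d + 1),
      deriv (fun t : ℂ => PhiACD a c d (Function.update (critPt c d) k t)) (critPt c d k) = 0) ∧
    -- explicitly, at `p` (where `z₁ = 1/2` and all other coordinates are `1/4`):
    (∑ _i : Fin c,
        (Complex.log (1 - Complex.exp (-(2*(π:ℂ)*Complex.I) * ((1:ℂ)/2 + 1/4)))
         + Complex.log (1 - Complex.exp (2*(π:ℂ)*Complex.I * ((1:ℂ)/2 + 1/4)))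
         - Complex.log (1 - Complex.exp (2*(π:ℂ)*Complex.I * ((1:ℂ)/2))))
      - ∑ _i : Fin d,
        (Complex.log (1 - Complex.exp (2*(π:ℂ)*Complex.I * ((1:ℂ)/2 + 1/4)))
         + Complex.log (1 - Complex.exp (-(2*(π:ℂ)*Complex.I) * ((1:ℂ)/2 + 1/4)))
         - Complex.log (1 - Complex.exp (-(2*(π:ℂ)*Complex.I) * ((1:ℂ)/2)))) =
      -(4*(π:ℂ)*Complex.I) * (a : ℂ) * ((1:ℂ)/2 - 1/2)) ∧
    -- the four-term log equation corresponding to each clasp `i = 1, …, c`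
    (∀ _i : Fin c,
      Complex.log (1 - Complex.exp (-(2*(π:ℂ)*Complex.I) * ((1:ℂ)/2 + 1/4)))
      + Complex.log (1 - Complex.exp (2*(π:ℂ)*Complex.I * ((1:ℂ)/2 + 1/4)))
      - Complex.log (1 - Complex.exp (-(2*(π:ℂ)*Complex.I) * ((1:ℂ)/4)))
      - Complex.log (1 - Complex.exp (2*(π:ℂ)*Complex.I * ((1:ℂ)/4))) = 0) ∧
    -- the four-term log equation corresponding to each mirror clasp `i = 1, …, d`
    (∀ _i : Fin d,
      Complex.log (1 - Complex.exp (2*(π:ℂ)*Complex.I * ((1:ℂ)/2 + 1/4)))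
      + Complex.log (1 - Complex.exp (-(2*(π:ℂ)*Complex.I) * ((1:ℂ)/2 + 1/4)))
      - Complex.log (1 - Complex.exp (2*(π:ℂ)*Complex.I * ((1:ℂ)/4)))
      - Complex.log (1 - Complex.exp (-(2*(π:ℂ)*Complex.I) * ((1:ℂ)/4))) = 0) := by
  
  have ha' : (1:ℂ) - (-Complex.I) = 1 + Complex.I := by ring
  have hb' : (1:ℂ) - (-1) = 2 := by norm_num
  refine ⟨?_, ?_, ?_, ?_⟩
  · -- all partial derivatives vanish
    intro k
    by_cases hk : k = 0
    · subst hk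
      have hpt : critPt c d 0 = 1/2 := by simp [critPt]
      rw [hpt]
      have hfun : (fun t : ℂ => PhiACD a c d (Function.update (critPt c d) 0 t))
          = fun t : ℂ => ((a : ℂ) / (2 * (π:ℂ) * Complex.I)) *
              (2*(π:ℂ)*Complex.I * (t - 1/2))^2
            + ∑ _i : Fin c, psi t (1/4) + ∑ _i : Fin d, kap t (1/4) := by
        funext t
        simp [PhiACD, Function.update_apply, critPt, Fin.ext_iff]
      rw [hfun]
      have hin : HasDerivAt (fun t : ℂ => 2*(π:ℂ)*Complex.I * (t - 1/2))
          (2*(π:ℂ)*Complex.I) ((1:ℂ)/2) := by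
        have := ((hasDerivAt_id' ((1:ℂ)/2)).sub_const (1/2)).const_mul (2*(π:ℂ)*Complex.I); rwa [mul_one] at this
      have hq := (hin.pow 2).const_mul ((a:ℂ)/(2*(π:ℂ)*Complex.I))
      have hsc : HasDerivAt (fun t : ℂ => ∑ _i : Fin c, psi t (1/4))
          (∑ _i : Fin c, (0:ℂ)) ((1:ℂ)/2) :=
        HasDerivAt.fun_sum (fun i _ => dpsi1)
      have hsd : HasDerivAt (fun t : ℂ => ∑ _i : Fin d, kap t (1/4))
          (∑ _i : Fin d, (0:ℂ)) ((1:ℂ)/2) :=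
        HasDerivAt.fun_sum (fun i _ => dkap1)
      have htot := (hq.add hsc).add hsd
      refine htot.deriv.trans ?_
      norm_num
    · have hpt : critPt c d k = 1/4 := by simp [critPt, hk]
      rw [hpt]
      have hk' : ¬ ((0 : Fin (c+d+1)) = k) := fun h => hk h.symm
      have hfun : (fun t : ℂ => PhiACD a c d (Function.update (critPt c d) k t))
          = fun t : ℂ => ((a : ℂ) / (2 * (π:ℂ) * Complex.I)) *
              (2*(π:ℂ)*Complex.I * ((1/2 : ℂ) - 1/2))^2
            + ∑ i : Fin c, psi (1/2)
                (if (⟨i.1 + 1, by have := i.isLt; omega⟩ : Fin (c+d+1)) = k then t else 1/4)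
            + ∑ i : Fin d, kap (1/2)
                (if (⟨c + i.1 + 1, by have := i.isLt; omega⟩ : Fin (c+d+1)) = k then t else 1/4) := by
        funext t
        have h0 : Function.update (critPt c d) k t 0 = 1/2 := by
          rw [Function.update_apply, if_neg hk']
          simp [critPt]
        unfold PhiACD
        rw [h0]
        congr 1
        · congr 1
          apply Finset.sum_congr rfl
          intro i _
          congr 1
          rw [Function.update_apply]
          by_cases hik : (⟨i.1 + 1, by have := i.isLt; omega⟩ : Fin (c+d+1)) = k
          · rw [if_pos hik, if_pos hik]
          · rw [if_neg hik, if_neg hik]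
            simp [critPt, Fin.ext_iff]
        · apply Finset.sum_congr rfl
          intro i _
          congr 1
          rw [Function.update_apply]
          by_cases hik : (⟨c + i.1 + 1, by have := i.isLt; omega⟩ : Fin (c+d+1)) = k
          · rw [if_pos hik, if_pos hik]
          · rw [if_neg hik, if_neg hik]
            simp [critPt, Fin.ext_iff]
      rw [hfun]
      have hq : HasDerivAt (fun _ : ℂ => ((a : ℂ) / (2 * (π:ℂ) * Complex.I)) *
          (2*(π:ℂ)*Complex.I * ((1/2 : ℂ) - 1/2))^2) 0 ((1:ℂ)/4) := hasDerivAt_const _ _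
      have hsc : HasDerivAt (fun t : ℂ => ∑ i : Fin c, psi (1/2)
            (if (⟨i.1 + 1, by have := i.isLt; omega⟩ : Fin (c+d+1)) = k then t else 1/4))
          (∑ _i : Fin c, (0:ℂ)) ((1:ℂ)/4) := by
        apply HasDerivAt.fun_sum
        intro i _
        by_cases hik : (⟨i.1 + 1, by have := i.isLt; omega⟩ : Fin (c+d+1)) = k
        · simp only [if_pos hik]
          exact dpsi2
        · simp only [if_neg hik]
          exact hasDerivAt_const _ _
      have hsd : HasDerivAt (fun t : ℂ => ∑ i : Fin d, kap (1/2)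
            (if (⟨c + i.1 + 1, by have := i.isLt; omega⟩ : Fin (c+d+1)) = k then t else 1/4))
          (∑ _i : Fin d, (0:ℂ)) ((1:ℂ)/4) := by
        apply HasDerivAt.fun_sum
        intro i _
        by_cases hik : (⟨c + i.1 + 1, by have := i.isLt; omega⟩ : Fin (c+d+1)) = k
        · simp only [if_pos hik]
          exact dkap2
        · simp only [if_neg hik]
          exact hasDerivAt_const _ _
      have htot := (hq.add hsc).add hsd
      refine htot.deriv.trans ?_
      norm_num
  · -- the explicit global equation
    simp only [e1, e2, e3, e4]
    have h1 : Complex.log (1 - Complex.I) + Complex.log (1 - -Complex.I)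
        - Complex.log (1 - -1) = 0 := by
      rw [ha', hb']; exact logid0
    have h2 : Complex.log (1 - -Complex.I) + Complex.log (1 - Complex.I)
        - Complex.log (1 - -1) = 0 := by
      rw [ha', hb']; linear_combination logid0
    rw [h1, h2]
    simp
  · -- clasp equations
    intro _
    simp only [e1, e2, e5, e6]
    ring
  · -- mirror clasp equations
    intro _
    simp only [e1, e2, e5, e6]
    ring
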